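/- Let 0 < p < 1 and let X, Y ∈ ℝ^{n×n} be symmetric positive definite matrices. Then Tr(Y^p) − Tr(X^p) + p · Tr((X − Y) Y^{p−1}) ≥ 0. -/

import Mathlib

open Matrix

/-- Real power of a real symmetric matrix, defined through the spectral decomposition
`A = U · diag(λ₁,…,λₙ) · Uᵀ` as `A^r = U · diag(λ₁^r,…,λₙ^r) · Uᵀ`
(junk value `0` if `A` is not symmetric). -/
noncomputable def mpow {n : ℕ} (A : Matrix (Fin n) (Fin n) ℝ) (r : ℝ) :
    Matrix (Fin n) (Fin n) ℝ :=
  if hA : A.IsHermitian then hA.cfc (fun x : ℝ => x ^ r) else 0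

/-- Tangent-line inequality for the concave function `x ↦ x ^ p`, `0 < p < 1`. -/
private lemma scalar_ineq {p a b : ℝ} (hp0 : 0 < p) (hp1 : p < 1) (ha : 0 < a) (hb : 0 < b) :
    a ^ p ≤ b ^ p + p * (a - b) * b ^ (p - 1) := by
  have hs : (-1 : ℝ) ≤ a / b - 1 := by
    have : 0 < a / b := div_pos ha hb
    linarith
  have h1 := rpow_one_add_le_one_add_mul_self hs hp0.le hp1.le
  have h2 : (a / b) ^ p ≤ 1 + p * (a / b - 1) := by
    have : (1 : ℝ) + (a / b - 1) = a / b := by ring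
    rwa [this] at h1
  have h3 : (a / b) ^ p = a ^ p / b ^ p := Real.div_rpow ha.le hb.le p
  have hbp : 0 < b ^ p := Real.rpow_pos_of_pos hb p
  have hbm : b ^ (p - 1) = b ^ p / b := by
    rw [Real.rpow_sub hb, Real.rpow_one]
  rw [h3, div_le_iff₀ hbp] at h2
  rw [hbm]
  calc a ^ p ≤ (1 + p * (a / b - 1)) * b ^ p := h2
    _ = b ^ p + p * (a - b) * (b ^ p / b) := by field_simp

private lemma trace_diag_conj {n : ℕ} (M : Matrix (Fin n) (Fin n) ℝ) (d e : Fin n → ℝ) :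
    (diagonal d * M * diagonal e * star M).trace
      = ∑ i, ∑ j, d i * e j * (M i j) ^ 2 := by
  simp only [Matrix.trace, Matrix.diag, Matrix.mul_apply, Matrix.diagonal_apply,
    Matrix.star_apply, star_trivial, ite_mul, mul_ite, zero_mul, mul_zero,
    Finset.sum_ite_eq, Finset.sum_ite_eq', Finset.mem_univ, if_true]
  refine Finset.sum_congr rfl fun i _ => Finset.sum_congr rfl fun j _ => ?_
  ring

private lemma trace_conj_mul_conj {n : ℕ} {U : Matrix (Fin n) (Fin n) ℝ}
    (V : Matrix (Fin n) (Fin n) ℝ) (hU : U * star U = 1) (d e : Fin n → ℝ) :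
    (U * diagonal d * star U * (V * diagonal e * star V)).trace
      = ∑ i, ∑ j, d i * e j * ((star U * V) i j) ^ 2 := by
  have h : U * diagonal d * star U * (V * diagonal e * star V)
      = U * (diagonal d * (star U * V) * diagonal e * star (star U * V)) * star U := by
    simp only [StarMul.star_mul, star_star, mul_assoc, hU, mul_one]
  rw [h, Matrix.trace_mul_cycle, mul_eq_one_comm.mp hU, Matrix.one_mul,
    trace_diag_conj]

private lemma trace_cfc' {n : ℕ} {A : Matrix (Fin n) (Fin n) ℝ} (hA : A.IsHermitian)
    (f : ℝ → ℝ) : (hA.cfc f).trace = ∑ i, f (hA.eigenvalues i) := by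
  rw [Matrix.IsHermitian.cfc, Unitary.conjStarAlgAut_apply, Matrix.trace_mul_cycle,
    Matrix.mem_unitaryGroup_iff'.mp hA.eigenvectorUnitary.2, Matrix.one_mul,
    Matrix.trace_diagonal]
  simp [RCLike.ofReal_real_eq_id]

/-- Inequality (17): for `0 < p < 1` and symmetric positive definite `X, Y`,
`Tr(Y^p) − Tr(X^p) + p·Tr((X − Y)·Y^{p−1}) ≥ 0`. -/
theorem stmt_4 {n : ℕ} (p : ℝ) (hp0 : 0 < p) (hp1 : p < 1)
    (X Y : Matrix (Fin n) (Fin n) ℝ) (hX : X.PosDef) (hY : Y.PosDef) :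
    0 ≤ (mpow Y p).trace - (mpow X p).trace + p * ((X - Y) * mpow Y (p - 1)).trace := by
  have hXh : X.IsHermitian := hX.isHermitian
  have hYh : Y.IsHermitian := hY.isHermitian
  set lam := hXh.eigenvalues with hlam
  set mu := hYh.eigenvalues with hmu
  have hlam_pos : ∀ i, 0 < lam i := fun i => hX.eigenvalues_pos i
  have hmu_pos : ∀ i, 0 < mu i := fun i => hY.eigenvalues_pos i
  set U : Matrix (Fin n) (Fin n) ℝ := ↑hXh.eigenvectorUnitary with hUdef
  set V : Matrix (Fin n) (Fin n) ℝ := ↑hYh.eigenvectorUnitary with hVdef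
  have hU : U * star U = 1 := Matrix.mem_unitaryGroup_iff.mp hXh.eigenvectorUnitary.2
  have hV : V * star V = 1 := Matrix.mem_unitaryGroup_iff.mp hYh.eigenvectorUnitary.2
  set M : Matrix (Fin n) (Fin n) ℝ := star U * V with hMdef
  have hMM : M * star M = 1 := by
    rw [hMdef, StarMul.star_mul, star_star]
    calc star U * V * (star V * U) = star U * (V * star V) * U := by
          simp only [Matrix.mul_assoc]
      _ = 1 := by rw [hV, Matrix.mul_one, mul_eq_one_comm.mp hU]
  have hMM' : star M * M = 1 := mul_eq_one_comm.mp hMM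
  set c : Fin n → Fin n → ℝ := fun i j => (M i j) ^ 2 with hc
  have hrow : ∀ i, ∑ j, c i j = 1 := by
    intro i
    have h := Matrix.ext_iff.mpr hMM i i
    simp only [Matrix.mul_apply, Matrix.star_apply, star_trivial, Matrix.one_apply_eq] at h
    rw [← h]
    exact Finset.sum_congr rfl fun j _ => by rw [hc]; ring
  have hcol : ∀ j, ∑ i, c i j = 1 := by
    intro j
    have h := Matrix.ext_iff.mpr hMM' j j
    simp only [Matrix.mul_apply, Matrix.star_apply, star_trivial, Matrix.one_apply_eq] at h
    rw [← h]
    exact Finset.sum_congr rfl fun i _ => by rw [hc]; ring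
  -- diagonal forms with real entries
  have hofX : diagonal (RCLike.ofReal ∘ lam) = diagonal lam := by
    simp [RCLike.ofReal_real_eq_id]
  have hXeq : X = U * diagonal lam * star U := by
    conv_lhs => rw [hXh.spectral_theorem]
    rw [hofX, Unitary.conjStarAlgAut_apply]
  have hofY : diagonal (RCLike.ofReal ∘ mu) = diagonal mu := by
    simp [RCLike.ofReal_real_eq_id]
  have hYeq : Y = V * diagonal mu * star V := by
    conv_lhs => rw [hYh.spectral_theorem]
    rw [hofY, Unitary.conjStarAlgAut_apply]
  -- the three traces
  have t1 : (mpow Y p).trace = ∑ j, mu j ^ p := by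
    rw [mpow, dif_pos hYh, trace_cfc' hYh]
  have t2 : (mpow X p).trace = ∑ i, lam i ^ p := by
    rw [mpow, dif_pos hXh, trace_cfc' hXh]
  have hmpowY : mpow Y (p - 1)
      = V * diagonal (fun j => mu j ^ (p - 1)) * star V := by
    rw [mpow, dif_pos hYh, Matrix.IsHermitian.cfc]
    have hfun : (RCLike.ofReal ∘ (fun x : ℝ => x ^ (p - 1)) ∘ hYh.eigenvalues)
        = fun j => mu j ^ (p - 1) := by
      funext j
      simp [RCLike.ofReal_real_eq_id, hmu]
    rw [hfun, Unitary.conjStarAlgAut_apply]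
  have t3 : (X * mpow Y (p - 1)).trace
      = ∑ i, ∑ j, lam i * mu j ^ (p - 1) * c i j := by
    rw [hmpowY]
    conv_lhs => rw [hXeq]
    exact trace_conj_mul_conj _ hU _ _
  have t4 : (Y * mpow Y (p - 1)).trace = ∑ i, mu i * mu i ^ (p - 1) := by
    rw [hmpowY]
    conv_lhs => rw [hYeq]
    rw [trace_conj_mul_conj _ hV _ _, mul_eq_one_comm.mp hV]
    simp [Matrix.one_apply, apply_ite (· ^ (2 : ℕ))]
  have tsub : ((X - Y) * mpow Y (p - 1)).trace
      = (X * mpow Y (p - 1)).trace - (Y * mpow Y (p - 1)).trace := by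
    rw [Matrix.sub_mul, Matrix.trace_sub]
  rw [t1, t2, tsub, t3, t4]
  -- the double-sum inequality
  have key : ∀ i j, 0 ≤ c i j *
      (mu j ^ p - lam i ^ p + p * (lam i - mu j) * mu j ^ (p - 1)) := by
    intro i j
    apply mul_nonneg (sq_nonneg _)
    have := scalar_ineq hp0 hp1 (hlam_pos i) (hmu_pos j)
    linarith
  have hS : 0 ≤ ∑ i, ∑ j, c i j *
      (mu j ^ p - lam i ^ p + p * (lam i - mu j) * mu j ^ (p - 1)) :=
    Finset.sum_nonneg fun i _ => Finset.sum_nonneg fun j _ => key i j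
  have e1 : ∑ j, mu j ^ p = ∑ i, ∑ j, c i j * mu j ^ p := by
    rw [Finset.sum_comm]
    exact Finset.sum_congr rfl fun j _ => by rw [← Finset.sum_mul, hcol j, one_mul]
  have e2 : ∑ i, lam i ^ p = ∑ i, ∑ j, c i j * lam i ^ p := by
    refine Finset.sum_congr rfl fun i _ => ?_
    rw [← Finset.sum_mul, hrow i, one_mul]
  have e3 : ∑ i, mu i * mu i ^ (p - 1)
      = ∑ i, ∑ j, c i j * (mu j * mu j ^ (p - 1)) := by
    rw [Finset.sum_comm]
    exact Finset.sum_congr rfl fun j _ => by rw [← Finset.sum_mul, hcol j, one_mul]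
  rw [e1, e2, e3]
  have esplit : ∑ i, ∑ j, c i j *
        (mu j ^ p - lam i ^ p + p * (lam i - mu j) * mu j ^ (p - 1))
      = (∑ i, ∑ j, c i j * mu j ^ p) - (∑ i, ∑ j, c i j * lam i ^ p)
        + (p * (∑ i, ∑ j, lam i * mu j ^ (p - 1) * c i j)
          - p * (∑ i, ∑ j, c i j * (mu j * mu j ^ (p - 1)))) := by
    simp only [Finset.mul_sum, ← Finset.sum_sub_distrib, ← Finset.sum_add_distrib]
    exact Finset.sum_congr rfl fun i _ => Finset.sum_congr rfl fun j _ => by ring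
  rw [esplit] at hS
  linarith
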